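/- Let ψ : I × U → ℝᵐ be C¹ and suppose Λ : I × U → M_{m×n}(ℝ) is continuous and satisfies Λ(t, x(t))·(ẋ(t) − f(t, x(t))) = d/dt [ψ(t, x(t))] for every C¹ function x : I → U (not only solutions). Then Λ(t,x) = ∂ψ/∂x(t,x) and Λ(t,x) f(t,x) = −∂ψ/∂t(t,x) for all (t,x) ∈ I × U. -/

import Mathlib

/-- If `Λ(t,x(t)) ⬝ (ẋ(t) − f(t,x(t))) = d/dt ψ(t,x(t))` for every `C¹` curve `x`
(not only solutions), then `Λ = ∂ψ/∂x` and `Λ f = −∂ψ/∂t` on `I × U`. -/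
theorem multiplier_eq_jacobian_and_mulVec_f
    (n m : ℕ) (I : Set ℝ) (U : Set (Fin n → ℝ))
    (hI : IsOpen I) (hU : IsOpen U)
    (f : ℝ → (Fin n → ℝ) → (Fin n → ℝ))
    (hf : ContinuousOn (fun p : ℝ × (Fin n → ℝ) => f p.1 p.2) (I ×ˢ U))
    (ψ : ℝ → (Fin n → ℝ) → (Fin m → ℝ))
    (hψ : ContDiffOn ℝ 1 (fun p : ℝ × (Fin n → ℝ) => ψ p.1 p.2) (I ×ˢ U))
    (Λ : ℝ → (Fin n → ℝ) → Matrix (Fin m) (Fin n) ℝ)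
    (hΛc : ContinuousOn (fun p : ℝ × (Fin n → ℝ) => Λ p.1 p.2) (I ×ˢ U))
    (hmult : ∀ x : ℝ → (Fin n → ℝ), (∀ t, DifferentiableAt ℝ x t) →
      (∀ t ∈ I, x t ∈ U) → ∀ t ∈ I,
      (Λ t (x t)).mulVec (deriv x t - f t (x t)) = deriv (fun s => ψ s (x s)) t) :
    ∀ t ∈ I, ∀ xv ∈ U,
      (∀ i j, Λ t xv i j =
        fderiv ℝ (fun p : ℝ × (Fin n → ℝ) => ψ p.1 p.2) (t, xv) (0, Pi.single j 1) i) ∧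
      (Λ t xv).mulVec (f t xv) =
        - fderiv ℝ (fun p : ℝ × (Fin n → ℝ) => ψ p.1 p.2) (t, xv) (1, 0) := by
  intro t ht xv hxv
  set F : ℝ × (Fin n → ℝ) → Fin m → ℝ := fun p => ψ p.1 p.2 with hFdef
  have hopen : IsOpen (I ×ˢ U) := hI.prod hU
  have hFd : DifferentiableAt ℝ F (t, xv) :=
    (hψ.contDiffAt (hopen.mem_nhds ⟨ht, hxv⟩)).differentiableAt one_ne_zero
  -- chain rule
  have key : ∀ (x : ℝ → Fin n → ℝ) (x' : Fin n → ℝ), HasDerivAt x x' t → x t = xv →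
      deriv (fun s => ψ s (x s)) t = fderiv ℝ F (t, xv) (1, x') := by
    intro x x' hx hxt
    subst hxt
    have hcurve : HasDerivAt (fun s => (s, x s)) ((1:ℝ), x') t :=
      HasDerivAt.prodMk (hasDerivAt_id t) hx
    exact (hFd.hasFDerivAt.comp_hasDerivAt t hcurve).deriv
  -- Part A : constant curve
  have hconst := hmult (fun _ => xv) (fun _ => differentiableAt_const xv)
    (fun _ _ => hxv) t ht
  rw [deriv_const t xv] at hconst
  have hkeyA : deriv (fun s => ψ s xv) t = fderiv ℝ F (t, xv) (1, 0) :=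
    key _ 0 (hasDerivAt_const t xv) rfl
  have hA : -(Λ t xv).mulVec (f t xv) = fderiv ℝ F (t, xv) (1, 0) := by
    rw [← hkeyA, ← hconst, zero_sub, Matrix.mulVec_neg]
  refine ⟨?_, by rw [← hA, neg_neg]⟩
  -- Part B : affine-ish curves
  intro i j
  obtain ⟨δ, hδ, hball⟩ := Metric.isOpen_iff.mp hU xv hxv
  set c := δ / 2 with hcdef
  have hc : 0 < c := by positivity
  set φ : ℝ → ℝ := fun s => c * Real.arctan ((s - t) / c) with hφdef
  have hφderiv : ∀ s, HasDerivAt φ (c * ((1 / (1 + ((s - t)/c) ^ 2)) * (1 / c))) s := by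
    intro s
    have hu : HasDerivAt (fun s : ℝ => (s - t) / c) (1 / c) s := by
      simpa using ((hasDerivAt_id s).sub_const t).div_const c
    exact ((Real.hasDerivAt_arctan ((s - t)/c)).comp s hu).const_mul c
  have hφt : φ t = 0 := by simp [hφdef]
  have hφbound : ∀ s, |φ s| < δ := by
    intro s
    have h1 : |Real.arctan ((s - t)/c)| < Real.pi / 2 := by
      rw [abs_lt]
      exact ⟨Real.neg_pi_div_two_lt_arctan _, Real.arctan_lt_pi_div_two _⟩
    have h2 : Real.pi / 2 < 2 := by
      have := Real.pi_lt_d2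
      linarith
    calc |φ s| = c * |Real.arctan ((s - t)/c)| := by
              rw [hφdef, abs_mul, abs_of_pos hc]
      _ < c * 2 := by nlinarith
      _ = δ := by rw [hcdef]; ring
  set e : Fin n → ℝ := Pi.single j 1 with hedef
  set x : ℝ → Fin n → ℝ := fun s => xv + φ s • e with hxdef
  have hxderiv : ∀ s, HasDerivAt x ((c * ((1 / (1 + ((s - t)/c) ^ 2)) * (1 / c))) • e) s :=
    fun s => by
      have h := (hasDerivAt_const s xv).add ((hφderiv s).smul_const e)
      rw [zero_add] at h; exact h
  have hxt : x t = xv := by simp [hxdef, hφt]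
  have hxmem : ∀ s ∈ I, x s ∈ U := by
    intro s _
    apply hball
    have : dist (x s) xv = ‖φ s • e‖ := by
      rw [dist_eq_norm]; congr 1; simp [hxdef]
    rw [Metric.mem_ball, this, norm_smul]
    have he : ‖e‖ = 1 := by simp [hedef, Pi.norm_single]
    rw [he, mul_one, Real.norm_eq_abs]
    exact hφbound s
  have hderivxt : deriv x t = e := by
    have := (hxderiv t).deriv
    rw [this]
    have : (c * ((1 / (1 + ((t - t)/c) ^ 2)) * (1 / c))) = 1 := by
      field_simp
      ring
    rw [this, one_smul]
  have hB := hmult x (fun s => (hxderiv s).differentiableAt) hxmem t ht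
  rw [hxt, hderivxt] at hB
  have hkeyB : deriv (fun s => ψ s (x s)) t = fderiv ℝ F (t, xv) (1, e) := by
    apply key x e _ hxt
    have := hxderiv t
    rwa [show (c * ((1 / (1 + ((t - t)/c) ^ 2)) * (1 / c))) • e = e by
      rw [show (c * ((1 / (1 + ((t - t)/c) ^ 2)) * (1 / c))) = 1 by field_simp; ring, one_smul]] at this
  rw [hkeyB] at hB
  have hsplit : fderiv ℝ F (t, xv) (1, e) =
      fderiv ℝ F (t, xv) (1, 0) + fderiv ℝ F (t, xv) (0, e) := by
    rw [← (fderiv ℝ F (t, xv)).map_add]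
    norm_num
  rw [hsplit, ← hA, Matrix.mulVec_sub] at hB
  have hfinal : (Λ t xv).mulVec e = fderiv ℝ F (t, xv) (0, e) := by
    rw [sub_eq_iff_eq_add] at hB
    rw [hB]; abel
  have := congrFun hfinal i
  simpa [hedef, Matrix.mulVec_single] using this
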